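/- As formal power series over 𝔽₂ (i.e., modulo 2), q·∏_{n=1}^∞ (1-q^n)^{24} ≡ ∑_{n=0}^∞ q^{(2n+1)^2}. Equivalently, the coefficient of q^m in q∏(1-q^n)^{24} is odd if and only if m is an odd square. -/

import Mathlib

section HelperSection
open Polynomial Finset

open Polynomial Finset

/-- triangular numbers -/
def tri : ℕ → ℕ
  | 0 => 0
  | n + 1 => tri n + n + 1

lemma tri_succ (n : ℕ) : tri (n+1) = tri n + n + 1 := rfl

lemma le_tri (n : ℕ) : n ≤ tri n := by
  induction n with
  | zero => simp [tri]
  | succ n ih => rw [tri_succ]; omega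

lemma tri_strictMono : StrictMono tri := by
  apply strictMono_nat_of_lt_succ
  intro n; rw [tri_succ]; omega

/-- exponent function -/
def eexp (n k : ℕ) : ℕ := if n ≤ k then tri (k - n) else tri (n - k - 1)

lemma eexp_of_le {n k : ℕ} (h : n ≤ k) : eexp n k = tri (k - n) := if_pos h
lemma eexp_of_gt {n k : ℕ} (h : k < n) : eexp n k = tri (n - k - 1) := if_neg (by omega)

lemma eexp_shift (n k : ℕ) : eexp (n+1) (k+1) = eexp n k := by
  rcases le_or_gt n k with h | h
  · rw [eexp_of_le (by omega), eexp_of_le h, Nat.succ_sub_succ]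
  · rw [eexp_of_gt (by omega), eexp_of_gt h, Nat.succ_sub_succ]

lemma eexp_step (n k : ℕ) : eexp n (k+1) + n = eexp n k + (k+1) := by
  rcases le_or_gt n k with h | h
  · obtain ⟨d, rfl⟩ := Nat.exists_eq_add_of_le h
    rw [eexp_of_le (by omega), eexp_of_le (by omega),
      show n + d + 1 - n = d + 1 by omega, show n + d - n = d by omega, tri_succ]
    omega
  · obtain ⟨d, rfl⟩ : ∃ d, n = k + 1 + d := ⟨n - k - 1, by omega⟩
    rcases Nat.eq_zero_or_pos d with rfl | hd
    · rw [eexp_of_le (by omega), eexp_of_gt (by omega),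
        show k + 1 + 0 - (k+1) = 0 by omega, show k + 1 + 0 - k - 1 = 0 by omega]
    · obtain ⟨d', rfl⟩ : ∃ d', d = d' + 1 := ⟨d - 1, by omega⟩
      rw [eexp_of_gt (by omega), eexp_of_gt (by omega),
        show k + 1 + (d' + 1) - (k + 1) - 1 = d' by omega,
        show k + 1 + (d' + 1) - k - 1 = d' + 1 by omega, tri_succ]
      omega

lemma eexp_zero (n : ℕ) : eexp (n+1) 0 = n + eexp n 0 := by
  rcases Nat.eq_zero_or_pos n with rfl | h
  · rw [eexp_of_gt (by omega), eexp_of_le (le_refl 0)]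
    simp [tri]
  · obtain ⟨d, rfl⟩ : ∃ d, n = d + 1 := ⟨n - 1, by omega⟩
    rw [eexp_of_gt (by omega), eexp_of_gt (by omega),
      show d + 1 + 1 - 0 - 1 = d + 1 by omega, show d + 1 - 0 - 1 = d by omega, tri_succ]
    omega

lemma eexp_right (n x : ℕ) : eexp n (n + x) = tri x := by
  rw [eexp_of_le (by omega), show n + x - n = x by omega]

lemma eexp_left (n x : ℕ) (h : x ≤ n) : eexp (n+1) (n - x) = tri x := by
  rw [eexp_of_gt (by omega), show n + 1 - (n - x) - 1 = x by omega]

/-- Gaussian binomial coefficients as polynomials over ℤ. -/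
noncomputable def gb : ℕ → ℕ → Polynomial ℤ
  | 0, 0 => 1
  | 0, _ + 1 => 0
  | _ + 1, 0 => 1
  | N + 1, j + 1 => gb N (j+1) + X ^ (N - j) * gb N j

lemma gb_zero_right (N : ℕ) : gb N 0 = 1 := by cases N <;> rfl

lemma gb_pascal1 (N j : ℕ) : gb (N+1) (j+1) = gb N (j+1) + X ^ (N - j) * gb N j := rfl

lemma gb_eq_zero {N j : ℕ} (h : N < j) : gb N j = 0 := by
  induction N generalizing j with
  | zero => cases j with | zero => omega | succ j => rfl
  | succ N ih =>
    cases j with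
    | zero => omega
    | succ j => rw [gb_pascal1, ih (by omega), ih (by omega)]; ring

lemma gb_diag (N : ℕ) : gb N N = 1 := by
  induction N with
  | zero => rfl
  | succ N ih => rw [gb_pascal1, gb_eq_zero (by omega), ih]; simp

lemma gb_pascal2 (N j : ℕ) (h : j ≤ N) : gb (N+1) (j+1) = X ^ (j+1) * gb N (j+1) + gb N j := by
  induction N generalizing j with
  | zero =>
    have hj0 : j = 0 := by omega
    subst hj0
    rw [gb_pascal1, show gb 0 1 = 0 from rfl, gb_zero_right]
    ring
  | succ N ih =>
    rcases Nat.eq_or_lt_of_le h with h1 | h1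
    · subst h1
      rw [gb_diag, gb_eq_zero (by omega), gb_diag]; ring
    · have hj : j ≤ N := by omega
      have a1 : gb (N+1+1) (j+1) = gb (N+1) (j+1) + X ^ (N + 1 - j) * gb (N+1) j :=
        gb_pascal1 (N+1) j
      have a2 : gb (N+1) (j+1) = X ^ (j+1) * gb N (j+1) + gb N j := ih j hj
      have a3 : gb (N+1) (j+1) = gb N (j+1) + X ^ (N - j) * gb N j := gb_pascal1 N j
      rcases Nat.eq_zero_or_pos j with rfl | hj0
      · rw [show N + 1 - 0 = N + 1 by omega] at a1
        rw [show N - 0 = N by omega] at a3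
        have b1 : gb (N+1) 0 = 1 := gb_zero_right (N+1)
        have b2 : gb N 0 = 1 := gb_zero_right N
        linear_combination a1 + a2 - X ^ (0+1) * a3 + (X ^ (N+1) - 1) * b1 + (1 - X ^ (N+1)) * b2
      · obtain ⟨i, rfl⟩ : ∃ i, j = i + 1 := ⟨j - 1, by omega⟩
        obtain ⟨e, he⟩ : ∃ e, N = i + e + 1 := ⟨N - i - 1, by omega⟩
        have a4 : gb (N+1) (i+1) = gb N (i+1) + X ^ (N - i) * gb N i := gb_pascal1 N i
        have a5 : gb (N+1) (i+1) = X ^ (i+1) * gb N (i+1) + gb N i := ih i (by omega)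
        subst he
        rw [show i + e + 1 + 1 - (i + 1) = e + 1 by omega] at a1
        rw [show i + e + 1 - (i + 1) = e by omega] at a3
        rw [show i + e + 1 - i = e + 1 by omega] at a4
        linear_combination a1 + a2 - X ^ (i+1+1) * a3 - a4 + X ^ (e+1) * a5

lemma gb_symm (N j : ℕ) (h : j ≤ N) : gb N j = gb N (N - j) := by
  induction N generalizing j with
  | zero =>
    have hj0 : j = 0 := by omega
    subst hj0
    rfl
  | succ N ih =>
    rcases Nat.eq_zero_or_pos j with rfl | hj0
    · rw [gb_zero_right, show N + 1 - 0 = N + 1 by omega, gb_diag]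
    · obtain ⟨i, rfl⟩ : ∃ i, j = i + 1 := ⟨j - 1, by omega⟩
      rcases Nat.eq_or_lt_of_le h with h1 | h1
      · rw [h1, gb_diag, show N + 1 - (N+1) = 0 by omega, gb_zero_right]
      · have hi : i + 1 ≤ N := by omega
        have e1 : gb (N+1) (i+1) = gb N (i+1) + X ^ (N - i) * gb N i := gb_pascal1 N i
        obtain ⟨c, hc⟩ : ∃ c, N - (i+1) = c := ⟨N - (i+1), rfl⟩
        have hNc : N + 1 - (i + 1) = c + 1 := by omega
        have e2 : gb (N+1) (c+1) = X ^ (c+1) * gb N (c+1) + gb N c := gb_pascal2 N c (by omega)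
        rw [hNc, e1, e2]
        have r1 : gb N (i+1) = gb N c := by
          rw [ih (i+1) hi, hc]
        have r2 : gb N i = gb N (c+1) := by
          rw [ih i (by omega), show N - i = c + 1 by omega]
        rw [r1, r2, show N - i = c + 1 by omega]
        ring

/-- key product identity: `gb N j * ∏_{i=1}^{j} (1-X^i) = ∏_{i=N-j+1}^{N} (1-X^i)` -/
lemma gb_mul_prod (N j : ℕ) (h : j ≤ N) :
    gb N j * ∏ i ∈ Finset.range j, (1 - X ^ (i+1)) =
      ∏ i ∈ Finset.Ico (N - j) N, (1 - (X:Polynomial ℤ) ^ (i+1)) := by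
  induction N generalizing j with
  | zero =>
    have hj0 : j = 0 := by omega
    subst hj0
    simp [gb_zero_right]
  | succ N ih =>
    rcases Nat.eq_zero_or_pos j with rfl | hj0
    · simp [gb_zero_right]
    · obtain ⟨i, rfl⟩ : ∃ i, j = i + 1 := ⟨j - 1, by omega⟩
      rcases Nat.eq_or_lt_of_le h with h1 | h1
      · have hiN : i = N := by omega
        subst hiN
        rw [show i + 1 - (i+1) = 0 by omega, gb_diag, one_mul, Finset.range_eq_Ico]
      · have hiN : i + 1 ≤ N := by omega
        obtain ⟨d, rfl⟩ : ∃ d, N = i + 1 + d := ⟨N - i - 1, by omega⟩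
        have A := ih (i+1) hiN
        have B := ih i (by omega)
        rw [Finset.prod_range_succ] at A
        rw [show i + 1 + d - (i+1) = d by omega] at A
        rw [show i + 1 + d - i = d + 1 by omega] at B
        rw [gb_pascal1, show i + 1 + d - i = d + 1 by omega, Finset.prod_range_succ,
          show i + 1 + d + 1 - (i + 1) = d + 1 by omega]
        have e1 : ∏ x ∈ Finset.Ico d (i+1+d), (1 - (X:Polynomial ℤ) ^ (x+1)) =
            (1 - X ^ (d+1)) * ∏ x ∈ Finset.Ico (d+1) (i+1+d), (1 - X ^ (x+1)) := by
          rw [Finset.prod_eq_prod_Ico_succ_bot (by omega)]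
        have e2 : ∏ x ∈ Finset.Ico (d+1) (i+1+d+1), (1 - (X:Polynomial ℤ) ^ (x+1)) =
            (∏ x ∈ Finset.Ico (d+1) (i+1+d), (1 - X ^ (x+1))) * (1 - X ^ (i+1+d+1)) := by
          rw [Finset.prod_Ico_succ_top (by omega)]
        linear_combination A + (X^(d+1) * (1 - X^(i+1))) * B + e1 - e2

section Cauchy

-- Work in ℤ[q][z] where z = X (outer), q = C X (inner).

private noncomputable def RHS (M n : ℕ) : Polynomial (Polynomial ℤ) :=
  ∑ k ∈ Finset.range (M+1), X ^ k * C ((X:Polynomial ℤ) ^ (eexp n k) * gb M k)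

private lemma step_n (M n : ℕ) :
    RHS M n * (X + C ((X:Polynomial ℤ)) ^ n) = RHS (M+1) (n+1) := by
  unfold RHS
  rw [Finset.sum_range_succ' (fun k => X ^ k * C ((X:Polynomial ℤ) ^ (eexp (n+1) k) * gb (M+1) k)) (M+1)]
  have expand : ∀ i ∈ Finset.range (M+1),
      X ^ (i+1) * C ((X:Polynomial ℤ) ^ (eexp (n+1) (i+1)) * gb (M+1) (i+1)) =
        (X ^ i * C ((X:Polynomial ℤ) ^ (eexp n i) * gb M i)) * X
        + (X ^ (i+1) * C ((X:Polynomial ℤ) ^ (n + eexp n (i+1)) * gb M (i+1))) := by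
    intro i hi
    simp only [Finset.mem_range] at hi
    rw [eexp_shift, gb_pascal2 M i (by omega)]
    have hexp : eexp n i + (i + 1) = n + eexp n (i+1) := by
      have := eexp_step n i; omega
    calc X ^ (i+1) * C ((X:Polynomial ℤ) ^ (eexp n i) * (X ^ (i+1) * gb M (i+1) + gb M i))
        = (X ^ i * C ((X:Polynomial ℤ) ^ (eexp n i) * gb M i)) * X
          + X ^ (i+1) * C ((X:Polynomial ℤ) ^ (eexp n i + (i+1)) * gb M (i+1)) := by
          simp only [map_add, map_mul, map_pow, pow_add]
          ring
      _ = _ := by rw [hexp]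
  rw [Finset.sum_congr rfl expand, Finset.sum_add_distrib]
  -- second sum: drop last term (it vanishes), then recombine with the k = 0 term
  rw [Finset.sum_range_succ (fun i => X ^ (i+1) * C ((X:Polynomial ℤ) ^ (n + eexp n (i+1)) * gb M (i+1)))]
  rw [gb_eq_zero (show M < M + 1 by omega)]
  have hzero : X ^ (M+1) * C ((X:Polynomial ℤ) ^ (n + eexp n (M+1)) * 0) = 0 := by simp
  rw [hzero, add_zero]
  have recomb : (∑ i ∈ Finset.range M, X ^ (i+1) * C ((X:Polynomial ℤ) ^ (n + eexp n (i+1)) * gb M (i+1)))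
      + X ^ 0 * C ((X:Polynomial ℤ) ^ (eexp (n+1) 0) * gb (M+1) 0) =
      ∑ k ∈ Finset.range (M+1), (X ^ k * C ((X:Polynomial ℤ) ^ (eexp n k) * gb M k)) * C ((X:Polynomial ℤ) ^ n) := by
    rw [Finset.sum_range_succ' (fun k => (X ^ k * C ((X:Polynomial ℤ) ^ (eexp n k) * gb M k)) * C ((X:Polynomial ℤ) ^ n)) M]
    refine congrArg₂ (· + ·) ?_ ?_
    · apply Finset.sum_congr rfl
      intro i _
      simp only [map_mul, map_pow, pow_add]
      ring
    · rw [gb_zero_right, gb_zero_right, eexp_zero]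
      simp only [map_mul, map_pow, pow_add]
      ring
  rw [add_assoc, recomb, ← Finset.sum_mul, ← Finset.sum_mul]
  rw [mul_add]
  simp only [map_pow]

private lemma step_m (m n : ℕ) :
    RHS (m+n) n * (1 + X * C ((X:Polynomial ℤ)) ^ (m+1)) = RHS (m+n+1) n := by
  unfold RHS
  rw [Finset.sum_range_succ' (fun k => X ^ k * C ((X:Polynomial ℤ) ^ (eexp n k) * gb (m+n+1) k)) (m+n+1)]
  have expand : ∀ i ∈ Finset.range (m+n+1),
      X ^ (i+1) * C ((X:Polynomial ℤ) ^ (eexp n (i+1)) * gb (m+n+1) (i+1)) =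
        X ^ (i+1) * C ((X:Polynomial ℤ) ^ (eexp n (i+1)) * gb (m+n) (i+1))
        + (X ^ i * C ((X:Polynomial ℤ) ^ (eexp n i) * gb (m+n) i)) * (X * C ((X:Polynomial ℤ)) ^ (m+1)) := by
    intro i hi
    simp only [Finset.mem_range] at hi
    rw [gb_pascal1 (m+n) i]
    have hexp : eexp n (i+1) + (m + n - i) = (m+1) + eexp n i := by
      have := eexp_step n i; omega
    calc X ^ (i+1) * C ((X:Polynomial ℤ) ^ (eexp n (i+1)) * (gb (m+n) (i+1) + X ^ (m+n-i) * gb (m+n) i))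
        = X ^ (i+1) * C ((X:Polynomial ℤ) ^ (eexp n (i+1)) * gb (m+n) (i+1))
          + X ^ (i+1) * C ((X:Polynomial ℤ) ^ (eexp n (i+1) + (m+n-i)) * gb (m+n) i) := by
          simp only [map_add, map_mul, map_pow, pow_add]
          ring
      _ = _ := by
          rw [hexp]
          simp only [map_mul, map_pow, pow_add]
          ring
  rw [Finset.sum_congr rfl expand, Finset.sum_add_distrib]
  rw [Finset.sum_range_succ (fun i => X ^ (i+1) * C ((X:Polynomial ℤ) ^ (eexp n (i+1)) * gb (m+n) (i+1)))]
  rw [gb_eq_zero (show m + n < m + n + 1 by omega)]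
  have hzero : X ^ (m+n+1) * C ((X:Polynomial ℤ) ^ (eexp n (m+n+1)) * 0) = 0 := by simp
  rw [hzero, add_zero]
  have recomb : (∑ i ∈ Finset.range (m+n), X ^ (i+1) * C ((X:Polynomial ℤ) ^ (eexp n (i+1)) * gb (m+n) (i+1)))
      + X ^ 0 * C ((X:Polynomial ℤ) ^ (eexp n 0) * gb (m+n+1) 0) =
      ∑ k ∈ Finset.range (m+n+1), X ^ k * C ((X:Polynomial ℤ) ^ (eexp n k) * gb (m+n) k) := by
    rw [Finset.sum_range_succ' (fun k => X ^ k * C ((X:Polynomial ℤ) ^ (eexp n k) * gb (m+n) k)) (m+n)]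
    rw [gb_zero_right, gb_zero_right]
  conv_rhs => rw [add_right_comm, recomb]
  rw [← Finset.sum_mul, mul_add, mul_one]

private lemma cauchy (m n : ℕ) :
    (∏ j ∈ Finset.range m, (1 + X * C ((X:Polynomial ℤ)) ^ (j+1)))
      * (∏ j ∈ Finset.range n, (X + C ((X:Polynomial ℤ)) ^ j)) = RHS (m+n) n := by
  induction m with
  | zero =>
    rw [Finset.prod_range_zero, one_mul]
    induction n with
    | zero =>
      unfold RHS
      rw [Finset.prod_range_zero, Finset.sum_range_one, gb_zero_right,
        eexp_of_le (le_refl 0)]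
      simp [tri]
    | succ n ihn =>
      rw [Finset.prod_range_succ, ihn]
      simp only [Nat.zero_add]
      exact step_n n n
  | succ m ihm =>
    rw [Finset.prod_range_succ, mul_comm (∏ j ∈ Finset.range m, (1 + X * C ((X:Polynomial ℤ)) ^ (j+1)))
      (1 + X * C ((X:Polynomial ℤ)) ^ (m+1)), mul_assoc, mul_comm (1 + X * C ((X:Polynomial ℤ)) ^ (m+1)),
      ihm, step_m m n, show m + n + 1 = m + 1 + n by omega]

end Cauchy

/-- Gauss's identity (finite form, over ℤ):
`(∏_{j=1}^{t} (1+X^j))² = ∑_{k=0}^{t} X^(eexp (t+1) k) * gb (2t+1) k`. -/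
lemma gauss (t : ℕ) :
    (∏ j ∈ Finset.range t, (1 + (X : Polynomial ℤ) ^ (j+1))) ^ 2 =
      ∑ k ∈ Finset.range (t+1), (X : Polynomial ℤ) ^ (eexp (t+1) k) * gb (2*t+1) k := by
  have hC := cauchy t (t+1)
  have hE := congrArg (Polynomial.eval (1 : Polynomial ℤ)) hC
  rw [eval_mul, eval_prod, eval_prod] at hE
  unfold RHS at hE
  rw [eval_finset_sum] at hE
  simp only [eval_add, eval_mul, eval_one, eval_pow, eval_X, eval_C, one_pow, one_mul, mul_one] at hE
  -- hE : (∏ j ∈ range t, (1 + X^(j+1))) * (∏ j ∈ range (t+1), (1 + X^j))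
  --        = ∑ k ∈ range (t+t+1+1), X^(eexp (t+1) k) * gb (t+(t+1)) k
  rw [Finset.prod_range_succ' (fun j => (1 : Polynomial ℤ) + X ^ j) t] at hE
  rw [pow_zero] at hE
  have h2t : t + (t + 1) = 2*t+1 := by omega
  rw [h2t] at hE
  have hfold : ∑ k ∈ Finset.range (2*t+1+1), (X : Polynomial ℤ) ^ (eexp (t+1) k) * gb (2*t+1) k
      = 2 * ∑ k ∈ Finset.range (t+1), (X : Polynomial ℤ) ^ (eexp (t+1) k) * gb (2*t+1) k := by
    have hsplit : ∑ k ∈ Finset.range (2*t+1+1), (X : Polynomial ℤ) ^ (eexp (t+1) k) * gb (2*t+1) k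
        = (∑ k ∈ Finset.range (t+1), (X : Polynomial ℤ) ^ (eexp (t+1) k) * gb (2*t+1) k)
          + ∑ k ∈ Finset.Ico (t+1) (2*t+1+1), (X : Polynomial ℤ) ^ (eexp (t+1) k) * gb (2*t+1) k := by
      rw [Finset.range_eq_Ico, Finset.range_eq_Ico]
      exact (Finset.sum_Ico_consecutive (fun k => (X : Polynomial ℤ) ^ (eexp (t+1) k) * gb (2*t+1) k) (by omega : 0 ≤ t+1) (by omega : t+1 ≤ 2*t+1+1)).symm
    rw [hsplit]
    have hrefl : ∑ k ∈ Finset.Ico (t+1) (2*t+1+1), (X : Polynomial ℤ) ^ (eexp (t+1) k) * gb (2*t+1) k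
        = ∑ k ∈ Finset.range (t+1), (X : Polynomial ℤ) ^ (eexp (t+1) k) * gb (2*t+1) k := by
      apply Finset.sum_bij' (fun k _ => 2*t+1-k) (fun k _ => 2*t+1-k)
      · intro a ha
        simp only [Finset.mem_Ico] at ha
        simp only [Finset.mem_range]
        omega
      · intro a ha
        simp only [Finset.mem_range] at ha
        simp only [Finset.mem_Ico]
        omega
      · intro a ha
        simp only [Finset.mem_Ico] at ha
        omega
      · intro a ha
        simp only [Finset.mem_range] at ha
        omega
      · intro a ha
        simp only [Finset.mem_Ico] at ha
        obtain ⟨x, rfl⟩ : ∃ x, a = t + 1 + x := ⟨a - (t+1), by omega⟩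
        have e1 : eexp (t+1) (t+1+x) = tri x := eexp_right (t+1) x
        have e2 : 2*t+1 - (t+1+x) = t - x := by omega
        have e3 : eexp (t+1) (t - x) = tri x := eexp_left t x (by omega)
        have hsym2 : gb (2*t+1) (t+1+x) = gb (2*t+1) (t - x) := by
          have h := gb_symm (2*t+1) (t+1+x) (by omega)
          rwa [show 2*t+1 - (t+1+x) = t - x by omega] at h
        rw [e2, e3, e1, hsym2]
    rw [hrefl]
    ring
  rw [hfold] at hE
  have h2 : (2 : Polynomial ℤ) ≠ 0 := by
    intro h
    have := congrArg (fun p => Polynomial.coeff p 0) h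
    simp at this
  apply mul_left_cancel₀ h2
  rw [← hE]
  ring

section ModTwo

/-- mapped Gauss identity over `ZMod 2` -/
lemma gaussM (t : ℕ) :
    (∏ j ∈ Finset.range t, (1 + (X : Polynomial (ZMod 2)) ^ (j+1))) ^ 2 =
      ∑ k ∈ Finset.range (t+1), (X : Polynomial (ZMod 2)) ^ (eexp (t+1) k) *
        (gb (2*t+1) k).map (Int.castRingHom (ZMod 2)) := by
  have h := congrArg (Polynomial.map (Int.castRingHom (ZMod 2))) (gauss t)
  rw [Polynomial.map_pow, Polynomial.map_prod, Polynomial.map_sum] at h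
  simp only [Polynomial.map_add, Polynomial.map_one, Polynomial.map_pow, Polynomial.map_X,
    Polynomial.map_mul] at h
  exact h

/-- mapped product identity over `ZMod 2` -/
lemma gb_mul_prodM (N j : ℕ) (h : j ≤ N) :
    (gb N j).map (Int.castRingHom (ZMod 2)) * ∏ i ∈ Finset.range j, (1 + X ^ (i+1)) =
      ∏ i ∈ Finset.Ico (N - j) N, (1 + (X : Polynomial (ZMod 2)) ^ (i+1)) := by
  have hm := congrArg (Polynomial.map (Int.castRingHom (ZMod 2))) (gb_mul_prod N j h)
  rw [Polynomial.map_mul, Polynomial.map_prod, Polynomial.map_prod] at hm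
  simp only [Polynomial.map_sub, Polynomial.map_one, Polynomial.map_pow, Polynomial.map_X,
    CharTwo.sub_eq_add] at hm
  exact hm

lemma X_pow_dvd_prod_sub_one (s : Finset ℕ) (f : ℕ → ℕ) (c : ℕ) (h : ∀ i ∈ s, c ≤ f i) :
    (X : Polynomial (ZMod 2)) ^ c ∣ (∏ i ∈ s, (1 + X ^ (f i))) - 1 := by
  induction s using Finset.induction_on with
  | empty => simp
  | insert a s' hnotmem ih =>
    rw [Finset.prod_insert hnotmem]
    have h1 : (X : Polynomial (ZMod 2)) ^ c ∣ (∏ i ∈ s', (1 + X ^ (f i))) - 1 :=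
      ih (fun i hi => h i (Finset.mem_insert_of_mem hi))
    have h2 : (X : Polynomial (ZMod 2)) ^ c ∣ X ^ (f a) :=
      pow_dvd_pow X (h a (Finset.mem_insert_self a s'))
    have key : (1 + (X:Polynomial (ZMod 2)) ^ (f a)) * (∏ i ∈ s', (1 + X ^ (f i))) - 1 =
        ((∏ i ∈ s', (1 + X ^ (f i))) - 1) + X ^ (f a) * (∏ i ∈ s', (1 + X ^ (f i))) := by
      ring
    rw [key]
    exact dvd_add h1 (h2.mul_right _)

lemma coeff_eq_of_dvd {p q : Polynomial (ZMod 2)} (t : ℕ) (h : (X:Polynomial (ZMod 2)) ^ (t+1) ∣ p - q) :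
    p.coeff t = q.coeff t := by
  obtain ⟨w, hw⟩ := h
  have hp : p = X ^ (t+1) * w + q := eq_add_of_sub_eq hw
  rw [hp, Polynomial.coeff_add, mul_comm, Polynomial.coeff_mul_X_pow', if_neg (by omega), zero_add]

open scoped Classical in
lemma keyL (t : ℕ) :
    ((∏ j ∈ Finset.range t, ((1 + X ^ (j+1)) * (1 + X ^ (2*(j+1))))
        : Polynomial (ZMod 2))).coeff t =
      (if ∃ j, t = tri j then (1 : ZMod 2) else 0) := by
  -- Step 1: the product is A^3 where A = ∏ (1 + X^(j+1))
  set A : Polynomial (ZMod 2) := ∏ j ∈ Finset.range t, (1 + X ^ (j+1)) with hA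
  have cube : (∏ j ∈ Finset.range t, ((1 + X ^ (j+1)) * (1 + X ^ (2*(j+1))))) = A ^ 2 * A := by
    rw [Finset.prod_mul_distrib, hA]
    have sq : ∏ j ∈ Finset.range t, ((1:Polynomial (ZMod 2)) + X ^ (2*(j+1))) =
        (∏ j ∈ Finset.range t, ((1:Polynomial (ZMod 2)) + X ^ (j+1))) ^ 2 := by
      rw [← Finset.prod_pow]
      apply Finset.prod_congr rfl
      intro j _
      rw [CharTwo.add_sq 1 ((X:Polynomial (ZMod 2)) ^ (j+1)), one_pow, ← pow_mul,
        mul_comm (j+1) 2]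
    rw [sq]; ring
  rw [cube, gaussM t, Finset.sum_mul]
  -- Step 2: each summand is ≡ X^(tri (t-k)) mod X^(t+1)
  have hdvd : (X:Polynomial (ZMod 2)) ^ (t+1) ∣
      (∑ k ∈ Finset.range (t+1), (X : Polynomial (ZMod 2)) ^ (eexp (t+1) k) *
        (gb (2*t+1) k).map (Int.castRingHom (ZMod 2)) * A)
      - ∑ k ∈ Finset.range (t+1), (X : Polynomial (ZMod 2)) ^ (tri (t - k)) := by
    rw [← Finset.sum_sub_distrib]
    apply Finset.dvd_sum
    intro k hk
    simp only [Finset.mem_range] at hk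
    have hkt : k ≤ t := by omega
    -- A = (∏_{range k}) * (∏_{Ico k t})
    have hAsplit : A = (∏ i ∈ Finset.range k, (1 + X ^ (i+1))) *
        ∏ i ∈ Finset.Ico k t, (1 + (X : Polynomial (ZMod 2)) ^ (i+1)) := by
      rw [hA, Finset.range_eq_Ico, Finset.range_eq_Ico]
      exact (Finset.prod_Ico_consecutive _ (by omega : 0 ≤ k) hkt).symm
    have hW := gb_mul_prodM (2*t+1) k (by omega)
    have he : eexp (t+1) k = tri (t - k) := by
      have := eexp_left t (t - k) (by omega)
      rw [show t - (t - k) = k by omega] at this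
      rw [← this]
    rw [he, hAsplit]
    have hterm : (X:Polynomial (ZMod 2)) ^ (tri (t-k)) *
        (gb (2*t+1) k).map (Int.castRingHom (ZMod 2)) *
        ((∏ i ∈ Finset.range k, (1 + X ^ (i+1))) *
          ∏ i ∈ Finset.Ico k t, (1 + (X:Polynomial (ZMod 2)) ^ (i+1)))
        = X ^ (tri (t-k)) *
          ((∏ i ∈ Finset.Ico (2*t+1-k) (2*t+1), (1 + (X:Polynomial (ZMod 2)) ^ (i+1))) *
            ∏ i ∈ Finset.Ico k t, (1 + X ^ (i+1))) := by
      rw [← hW]; ring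
    rw [hterm]
    have hP : (X:Polynomial (ZMod 2)) ^ (k+1) ∣
        ((∏ i ∈ Finset.Ico k t, (1 + (X : Polynomial (ZMod 2)) ^ (i+1))) *
          ∏ i ∈ Finset.Ico (2*t+1-k) (2*t+1), (1 + (X : Polynomial (ZMod 2)) ^ (i+1))) - 1 := by
      have d1 := X_pow_dvd_prod_sub_one (Finset.Ico k t) (fun i => i+1) (k+1)
        (fun i hi => by simp only [Finset.mem_Ico] at hi; show k + 1 ≤ i + 1; omega)
      have d2 := X_pow_dvd_prod_sub_one (Finset.Ico (2*t+1-k) (2*t+1)) (fun i => i+1) (k+1)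
        (fun i hi => by simp only [Finset.mem_Ico] at hi; show k + 1 ≤ i + 1; omega)
      obtain ⟨u, hu⟩ := d1
      obtain ⟨v, hv⟩ := d2
      have e1 : (∏ i ∈ Finset.Ico k t, (1 + (X : Polynomial (ZMod 2)) ^ (i+1))) =
          1 + X^(k+1) * u := (eq_add_of_sub_eq hu).trans (add_comm _ _)
      have e2 : (∏ i ∈ Finset.Ico (2*t+1-k) (2*t+1), (1 + (X : Polynomial (ZMod 2)) ^ (i+1))) =
          1 + X^(k+1) * v := (eq_add_of_sub_eq hv).trans (add_comm _ _)
      rw [e1, e2]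
      exact ⟨u + v + X^(k+1)*u*v, by ring⟩
    obtain ⟨w, hw⟩ := hP
    have expand2 : (X:Polynomial (ZMod 2)) ^ (tri (t-k)) *
        ((∏ i ∈ Finset.Ico (2*t+1-k) (2*t+1), (1 + (X : Polynomial (ZMod 2)) ^ (i+1))) *
          ∏ i ∈ Finset.Ico k t, (1 + (X : Polynomial (ZMod 2)) ^ (i+1)))
        - X ^ (tri (t-k)) = X ^ (tri (t-k)) * (X^(k+1) * w) := by
      linear_combination (X:Polynomial (ZMod 2)) ^ (tri (t-k)) * hw
    rw [expand2]
    have : tri (t-k) + (k+1) ≥ t + 1 := by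
      have := le_tri (t-k); omega
    calc (X:Polynomial (ZMod 2)) ^ (t+1) ∣ X ^ (tri (t-k) + (k+1)) := pow_dvd_pow X this
      _ ∣ X ^ (tri (t-k)) * (X^(k+1) * w) := by
          rw [pow_add]
          exact mul_dvd_mul_left _ ⟨w, rfl⟩
  -- Step 3: take coefficients
  rw [coeff_eq_of_dvd t hdvd]
  have hrefl := Finset.sum_range_reflect (fun j => (X:Polynomial (ZMod 2)) ^ (tri j)) (t+1)
  rw [show ∑ k ∈ Finset.range (t+1), (X : Polynomial (ZMod 2)) ^ (tri (t - k)) =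
      ∑ j ∈ Finset.range (t+1), (X:Polynomial (ZMod 2)) ^ (tri j) from by
    rw [← hrefl]
    exact Finset.sum_congr rfl (fun k hk => by congr 2 <;> omega)]
  rw [Polynomial.finset_sum_coeff]
  simp only [Polynomial.coeff_X_pow]
  by_cases hex : ∃ j, t = tri j
  · obtain ⟨j0, hj0⟩ := hex
    rw [if_pos ⟨j0, hj0⟩]
    have hs : ∑ j ∈ Finset.range (t+1), (if t = tri j then (1:ZMod 2) else 0) =
        if t = tri j0 then (1:ZMod 2) else 0 := by
      apply Finset.sum_eq_single j0
      · intro b _ hb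
        exact if_neg (fun hc => hb (tri_strictMono.injective (hj0.symm.trans hc)).symm)
      · intro habs
        exact absurd (by simp only [Finset.mem_range]; have := le_tri j0; omega) habs
    rw [hs, if_pos hj0]
  · rw [if_neg hex]
    apply Finset.sum_eq_zero
    intro j _
    rw [if_neg (fun hc => hex ⟨j, hc⟩)]

end ModTwo

lemma odd_square_tri (j : ℕ) : (2*j+1)^2 = 8 * tri j + 1 := by
  induction j with
  | zero => simp [tri]
  | succ j ih =>
    rw [tri_succ]
    have : (2*(j+1)+1)^2 = (2*j+1)^2 + 8*j + 8 := by ring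
    omega

lemma coeff_stable (t : ℕ) : ∀ s, t ≤ s →
    ((∏ j ∈ Finset.range s, ((1 + X ^ (j+1)) * (1 + X ^ (2*(j+1))))
        : Polynomial (ZMod 2))).coeff t =
    ((∏ j ∈ Finset.range t, ((1 + X ^ (j+1)) * (1 + X ^ (2*(j+1))))
        : Polynomial (ZMod 2))).coeff t := by
  intro s hs
  induction s with
  | zero => have : t = 0 := by omega
            subst this; rfl
  | succ s ih =>
    rcases Nat.eq_or_lt_of_le hs with h1 | h1
    · rw [h1]
    · have hts : t ≤ s := by omega
      rw [Finset.prod_range_succ]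
      rw [← ih hts]
      apply coeff_eq_of_dvd
      have key : (∏ j ∈ Finset.range s, ((1 + X ^ (j+1)) * (1 + X ^ (2*(j+1))))
          : Polynomial (ZMod 2)) * ((1 + X ^ (s+1)) * (1 + X ^ (2*(s+1))))
          - (∏ j ∈ Finset.range s, ((1 + X ^ (j+1)) * (1 + X ^ (2*(j+1)))))
          = (∏ j ∈ Finset.range s, ((1 + X ^ (j+1)) * (1 + X ^ (2*(j+1)))))
            * (X ^ (s+1) * (1 + X ^ (s+1) + X ^ (2*(s+1)))) := by
        ring
      rw [key]
      have hd : (X : Polynomial (ZMod 2)) ^ (t+1) ∣ X ^ (s+1) := pow_dvd_pow X (by omega)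
      exact Dvd.dvd.mul_left (hd.mul_right _) _

lemma parity_int (c : ℤ) : Odd c ↔ ((c : ZMod 2) = 1) := by
  have hne : ∀ a : ZMod 2, a ≠ 0 ↔ a = 1 := by decide
  constructor
  · intro h
    have h2 : ¬ ((2:ℤ) ∣ c) := by rw [Int.odd_iff] at h; omega
    have hc : ((c : ZMod 2)) ≠ 0 := fun hc =>
      h2 (by exact_mod_cast (ZMod.intCast_zmod_eq_zero_iff_dvd c 2).mp hc)
    exact (hne _).mp hc
  · intro h
    rw [Int.odd_iff]
    by_contra hodd
    have h2 : (2:ℤ) ∣ c := by omega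
    have hc : ((c:ZMod 2)) = 0 :=
      (ZMod.intCast_zmod_eq_zero_iff_dvd c 2).mpr (by exact_mod_cast h2)
    rw [hc] at h
    exact absurd h (by decide)

lemma hfac_lemma (a : ℕ) : ((1 : Polynomial (ZMod 2)) - X ^ a) ^ 24 =
    (1 + X ^ (8*a)) * (1 + X ^ (16*a)) := by
  rw [CharTwo.sub_eq_add]
  have h8 : ((1 : Polynomial (ZMod 2)) + X ^ a) ^ 8 = 1 + X ^ (8*a) := by
    have h := add_pow_char_pow (R := Polynomial (ZMod 2)) 1 (X ^ a) 2 3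
    norm_num at h
    rw [h, ← pow_mul, mul_comm a 8]
  have h24 : ((1 : Polynomial (ZMod 2)) + X ^ a) ^ 24 =
      (((1 : Polynomial (ZMod 2)) + X ^ a) ^ 8) ^ 3 := by
    rw [← pow_mul]
  rw [h24, h8]
  have hsq : ((1:Polynomial (ZMod 2)) + X ^ (8*a)) ^ 2 = 1 + (X ^ (8*a)) ^ 2 := by
    rw [CharTwo.add_sq, one_pow]
  calc (1 + (X:Polynomial (ZMod 2)) ^ (8*a)) ^ 3
      = (1 + X ^ (8*a)) * (1 + X ^ (8*a))^2 := by ring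
    _ = (1 + X ^ (8*a)) * (1 + (X ^ (8*a))^2) := by rw [hsq]
    _ = (1 + X ^ (8*a)) * (1 + X ^ (16*a)) := by rw [← pow_mul, show 8*a*2 = 16*a by ring]

lemma hexpand_lemma (s : ℕ) : (∏ n ∈ Finset.range s,
    ((1 + X ^ (8*(n+1))) * (1 + X ^ (16*(n+1))) : Polynomial (ZMod 2))) =
    Polynomial.expand (ZMod 2) 8 (∏ n ∈ Finset.range s,
      ((1 + X ^ (n+1)) * (1 + X ^ (2*(n+1))))) := by
  rw [map_prod]
  apply Finset.prod_congr rfl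
  intro n _
  rw [map_mul, map_add, map_add, map_one, map_pow, map_pow, Polynomial.expand_X,
    ← pow_mul, ← pow_mul, show 8*(2*(n+1)) = 16*(n+1) by ring]

open scoped Classical in
lemma main_coeff (M : ℕ) :
    (PowerSeries.coeff (R := ZMod 2) M) (PowerSeries.map (Int.castRingHom (ZMod 2))
      (∏ n ∈ Finset.range (M+1), (1 - PowerSeries.X ^ (n + 1)) ^ 24)) =
    (if 8 ∣ M ∧ ∃ j, M / 8 = tri j then (1 : ZMod 2) else 0) := by
  have hpoly : PowerSeries.map (Int.castRingHom (ZMod 2))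
      (∏ n ∈ Finset.range (M+1), (1 - PowerSeries.X ^ (n + 1)) ^ 24) =
      ((∏ n ∈ Finset.range (M+1), ((1 - X ^ (n+1)) ^ 24 : Polynomial (ZMod 2))
        : Polynomial (ZMod 2)) : PowerSeries (ZMod 2)) := by
    rw [map_prod]
    rw [show ((∏ n ∈ Finset.range (M+1), ((1 - X ^ (n+1)) ^ 24 : Polynomial (ZMod 2))
        : Polynomial (ZMod 2)) : PowerSeries (ZMod 2)) =
        Polynomial.coeToPowerSeries.ringHom (∏ n ∈ Finset.range (M+1),
          ((1 - X ^ (n+1)) ^ 24 : Polynomial (ZMod 2))) from rfl]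
    rw [map_prod]
    apply Finset.prod_congr rfl
    intro n _
    rw [map_pow, map_sub, map_one, map_pow, PowerSeries.map_X]
    rw [show Polynomial.coeToPowerSeries.ringHom ((1 - X ^ (n+1)) ^ 24 : Polynomial (ZMod 2))
        = (((1 - X ^ (n+1)) ^ 24 : Polynomial (ZMod 2)) : PowerSeries (ZMod 2)) from rfl]
    rw [Polynomial.coe_pow, Polynomial.coe_sub, Polynomial.coe_one, Polynomial.coe_pow,
      Polynomial.coe_X]
  rw [hpoly, Polynomial.coeff_coe]
  rw [Finset.prod_congr rfl (fun n _ => hfac_lemma (n+1)), hexpand_lemma,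
    Polynomial.coeff_expand (by norm_num : 0 < 8)]
  by_cases hdvd : 8 ∣ M
  · obtain ⟨t, rfl⟩ := hdvd
    rw [if_pos (by omega : 8 ∣ 8 * t)]
    rw [show 8 * t / 8 = t by omega]
    rw [coeff_stable t (8*t+1) (by omega), keyL]
    by_cases hex : ∃ j, t = tri j
    · rw [if_pos hex, if_pos ⟨⟨t, rfl⟩, hex⟩]
    · rw [if_neg hex, if_neg]
      rintro ⟨-, j, hj⟩
      exact hex ⟨j, hj⟩
  · rw [if_neg hdvd, if_neg (fun h => hdvd h.1)]

end HelperSection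

open PowerSeries

/-- The coefficient of `q^m` in `q · ∏_{n=1}^∞ (1 - q^n)^24` is odd if and only if `m` is an
odd square.  (The infinite product is captured by the truncation `∏_{n=1}^m`, since factors
`(1 - q^n)` with `n > m` do not affect the coefficient of `q^m`.) -/
theorem tau_odd_iff_odd_square (m : ℕ) :
    Odd ((PowerSeries.coeff (R := ℤ) m)
        (PowerSeries.X * ∏ n ∈ Finset.range m, (1 - PowerSeries.X ^ (n + 1)) ^ 24)) ↔
      ∃ j : ℕ, m = (2 * j + 1) ^ 2 := by
  rcases Nat.eq_zero_or_pos m with rfl | hm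
  · have h0 : (PowerSeries.coeff (R := ℤ) 0)
        (PowerSeries.X * ∏ n ∈ Finset.range 0, (1 - PowerSeries.X ^ (n + 1)) ^ 24) = 0 := by
      simp [PowerSeries.coeff_zero_eq_constantCoeff, map_mul]
    rw [h0]
    constructor
    · intro h; exact absurd h (by simp [Int.odd_iff])
    · rintro ⟨j, hj⟩
      have : 0 < (2*j+1)^2 := by positivity
      omega
  · obtain ⟨M, rfl⟩ : ∃ M, m = M + 1 := ⟨m - 1, by omega⟩
    rw [PowerSeries.coeff_succ_X_mul, parity_int]
    rw [show ((((PowerSeries.coeff (R := ℤ) M) (∏ n ∈ Finset.range (M+1),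
        (1 - PowerSeries.X ^ (n + 1)) ^ 24)) : ℤ) : ZMod 2) =
        (PowerSeries.coeff (R := ZMod 2) M) (PowerSeries.map (Int.castRingHom (ZMod 2))
          (∏ n ∈ Finset.range (M+1), (1 - PowerSeries.X ^ (n + 1)) ^ 24)) from by
      rw [PowerSeries.coeff_map]; rfl]
    rw [main_coeff M]
    constructor
    · intro h
      by_cases hc : 8 ∣ M ∧ ∃ j, M / 8 = tri j
      · obtain ⟨⟨t, rfl⟩, j, hj⟩ := hc
        rw [show 8 * t / 8 = t by omega] at hj
        exact ⟨j, by rw [odd_square_tri]; omega⟩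
      · rw [if_neg hc] at h
        exact absurd h (by decide)
    · rintro ⟨j, hj⟩
      rw [odd_square_tri] at hj
      have h8 : M = 8 * tri j := by omega
      rw [if_pos ⟨⟨tri j, h8⟩, ⟨j, by omega⟩⟩]
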